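/- Let k and s be natural numbers with 1 ≤ s ≤ k, and let λ > 1 be a real number. Suppose g_1, …, g_k : ℝ_{≥0} → ℝ are 1-Lipschitz functions with g_r(0) = 0 for every r. If for every real x ≥ 1 there are at least s indices r such that both x and -x are visited by g_r within time λx (i.e., there exist t_1, t_2 ∈ [0, λx] with g_r(t_1) = x and g_r(t_2) = -x), then λ ≥ 2·((k+s)^{k+s}/(s^s · k^k))^{1/k} + 1. -/

import Mathlib

open scoped NNReal
open Real Set

namespace SLC

noncomputable def tau (G : ℝ → ℝ) (v : ℝ) : ℝ := sInf {t | G t = v}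

structure Path (G : ℝ → ℝ) : Prop where
  lip : LipschitzWith 1 G
  npos : ∀ t ≤ 0, G t = 0

variable {G : ℝ → ℝ}

lemma Path.zero (hG : Path G) : G 0 = 0 := hG.npos 0 le_rfl

lemma Path.gap (hG : Path G) {a b u v : ℝ} (hab : a ≤ b) (hu : G a = u) (hv : G b = v) :
    a + |v - u| ≤ b := by
  have h := hG.lip.dist_le_mul a b
  rw [Real.dist_eq, Real.dist_eq, hu, hv] at h
  norm_num at h
  have h2 : |a - b| = b - a := by rw [abs_sub_comm]; exact abs_of_nonneg (by linarith)
  rw [h2, abs_sub_comm u v] at h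
  linarith

lemma Path.mem_lb (hG : Path G) {v t : ℝ} (h1 : 1 ≤ |v|) (ht : G t = v) : |v| ≤ t := by
  by_cases h : t ≤ 0
  · rw [hG.npos t h] at ht; rw [← ht] at h1; simp at h1; linarith
  · push_neg at h
    have h2 := hG.gap (u := 0) (v := v) h.le hG.zero ht
    simpa using h2

lemma Path.tau_mem (hG : Path G) {v : ℝ} (h1 : 1 ≤ |v|) (hv : ∃ t, G t = v) :
    G (tau G v) = v := by
  obtain ⟨t, ht⟩ := hv
  have hne : {t | G t = v}.Nonempty := ⟨t, ht⟩
  have hbdd : BddBelow {t | G t = v} := ⟨|v|, fun u hu => hG.mem_lb h1 hu⟩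
  have hcl : IsClosed {t | G t = v} := isClosed_eq hG.lip.continuous continuous_const
  exact hcl.csInf_mem hne hbdd

lemma Path.tau_le (hG : Path G) {v t : ℝ} (h1 : 1 ≤ |v|) (ht : G t = v) : tau G v ≤ t :=
  csInf_le ⟨|v|, fun u hu => hG.mem_lb h1 hu⟩ ht

lemma Path.tau_ge (hG : Path G) {v : ℝ} (h1 : 1 ≤ |v|) (hv : ∃ t, G t = v) :
    |v| ≤ tau G v :=
  hG.mem_lb h1 (hG.tau_mem h1 hv)

lemma Path.tau_mono (hG : Path G) {σ a b : ℝ} (hσ : σ = 1 ∨ σ = -1) (h1 : 1 ≤ a)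
    (hab : a ≤ b) (hb : ∃ t, G t = σ * b) : tau G (σ * a) ≤ tau G (σ * b) := by
  have hb1 : (1:ℝ) ≤ b := le_trans h1 hab
  have habsb : |σ * b| = b := by rcases hσ with h | h <;> rw [h] <;>
    simp [abs_of_nonneg, abs_of_nonpos, le_trans zero_le_one hb1]
  have habsa : |σ * a| = a := by rcases hσ with h | h <;> rw [h] <;>
    simp [abs_of_nonneg, abs_of_nonpos, le_trans zero_le_one h1]
  have hTb : G (tau G (σ * b)) = σ * b := hG.tau_mem (by rw [habsb]; exact hb1) hb
  have hTbpos : (0:ℝ) ≤ tau G (σ * b) := by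
    have := hG.tau_ge (by rw [habsb]; exact hb1) hb; rw [habsb] at this; linarith
  have hcont : ContinuousOn G (Icc 0 (tau G (σ * b))) := hG.lip.continuous.continuousOn
  rcases hσ with h | h
  · subst h
    have : (1:ℝ) * a ∈ Icc (G 0) (G (tau G (1 * b))) := by
      rw [hG.zero, hTb]; constructor <;> [linarith; nlinarith]
    obtain ⟨t, htm, hGt⟩ := intermediate_value_Icc hTbpos hcont this
    exact le_trans (hG.tau_le (by rw [habsa]; exact h1) hGt) htm.2
  · subst h
    have : (-1:ℝ) * a ∈ Icc (G (tau G (-1 * b))) (G 0) := by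
      rw [hG.zero, hTb]; constructor <;> [nlinarith; linarith]
    obtain ⟨t, htm, hGt⟩ := intermediate_value_Icc' hTbpos hcont this
    exact le_trans (hG.tau_le (by rw [habsa]; exact h1) hGt) htm.2


/-! ### Block machinery -/

noncomputable def Ab (q : ℝ) (l : List (ℕ × ℕ)) : ℝ := (l.map fun b => q ^ b.2).sum

def capsOK (q c : ℝ) : List (ℕ × ℕ) → Prop
  | [] => True
  | b :: tl => Ab q (b :: tl) ≤ c * q ^ b.1 ∧ capsOK q c tl

def HInv (G : ℝ → ℝ) (q : ℝ) (C : Finset ℕ) (b : ℕ × ℕ) (tl : List (ℕ × ℕ)) : Prop :=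
  ∃ σ : ℝ, (σ = 1 ∨ σ = -1) ∧
    tau G (-(σ * q ^ b.2)) ≤ tau G (σ * q ^ b.1) ∧
    2 * Ab q tl + q ^ b.2 ≤ tau G (-(σ * q ^ b.2)) ∧
    ∀ m ∈ C, tau G (-(σ * q ^ m)) ≤ tau G (σ * q ^ b.1) → m ≤ b.2

def headOK (G : ℝ → ℝ) (q : ℝ) (C : Finset ℕ) : List (ℕ × ℕ) → Prop
  | [] => True
  | b :: tl => HInv G q C b tl

def Good (G : ℝ → ℝ) (c q : ℝ) (C : Finset ℕ) (n : ℕ) (l : List (ℕ × ℕ)) : Prop :=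
  capsOK q c l ∧
  (∀ b ∈ l, b.1 ∈ C ∧ b.2 ∈ C ∧ b.1 ≤ b.2 ∧ b.1 < n) ∧
  (∀ m ∈ C, m < n → ∃ b ∈ l, b.1 ≤ m ∧ m ≤ b.2) ∧
  headOK G q C l

lemma sigabs {σ p : ℝ} (hσ : σ = 1 ∨ σ = -1) (hp : 0 ≤ p) : |σ * p| = p := by
  rcases hσ with h | h <;> subst h <;> simp [abs_of_nonneg, abs_of_nonpos, hp]

lemma negsig {σ : ℝ} (hσ : σ = 1 ∨ σ = -1) : -σ = 1 ∨ -σ = -1 := by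
  rcases hσ with h | h <;> subst h <;> simp

lemma Ab_nonneg {q : ℝ} (hq : 0 < q) (l : List (ℕ × ℕ)) : 0 ≤ Ab q l := by
  apply List.sum_nonneg; intro x hx
  simp only [List.mem_map] at hx; obtain ⟨b, _, rfl⟩ := hx; positivity

section Blocks

variable (hG : Path G) {lam c q : ℝ} (hlam : lam = 1 + 2 * c) (hq : 1 < q)
  {C : Finset ℕ}
  (hcov : ∀ m ∈ C, ∀ σ : ℝ, σ = 1 ∨ σ = -1 → ∃ t, t ≤ lam * q ^ m ∧ G t = σ * q ^ m)

include hG hlam hq hcov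

lemma covtauP {m : ℕ} (hm : m ∈ C) {σ : ℝ} (hσ : σ = 1 ∨ σ = -1) :
    G (tau G (σ * q ^ m)) = σ * q ^ m ∧ tau G (σ * q ^ m) ≤ lam * q ^ m ∧
      q ^ m ≤ tau G (σ * q ^ m) := by
  have h1 : (1:ℝ) ≤ q ^ m := one_le_pow₀ hq.le
  have habs : |σ * q ^ m| = q ^ m := sigabs hσ (by positivity)
  have h1' : (1:ℝ) ≤ |σ * q ^ m| := by rw [habs]; exact h1
  obtain ⟨t, ht, hGt⟩ := hcov m hm σ hσ
  refine ⟨hG.tau_mem h1' ⟨t, hGt⟩, (hG.tau_le h1' hGt).trans ht, ?_⟩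
  have h := hG.tau_ge h1' ⟨t, hGt⟩
  rwa [habs] at h

lemma covtauN {m : ℕ} (hm : m ∈ C) {σ : ℝ} (hσ : σ = 1 ∨ σ = -1) :
    G (tau G (-(σ * q ^ m))) = -(σ * q ^ m) ∧ tau G (-(σ * q ^ m)) ≤ lam * q ^ m ∧
      q ^ m ≤ tau G (-(σ * q ^ m)) := by
  have h := covtauP hG hlam hq hcov hm (negsig hσ)
  rw [neg_mul] at h
  exact h

lemma extendAux {n : ℕ} (hn : n ∈ C) {l : List (ℕ × ℕ)} (hg : Good G c q C n l)
    (htop : ∀ b tl, l = b :: tl → b.2 < n) {σ' : ℝ} (hσ' : σ' = 1 ∨ σ' = -1)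
    (hlate : tau G (-(σ' * q ^ n)) ≤ tau G (σ' * q ^ n)) :
    ∃ γ', Good G c q C (n + 1) ((n, γ') :: l) := by
  classical
  set S : Finset ℕ := C.filter (fun m => tau G (-(σ' * q ^ m)) ≤ tau G (σ' * q ^ n))
    with hSdef
  have hnS : n ∈ S := by rw [hSdef, Finset.mem_filter]; exact ⟨hn, hlate⟩
  have hSne : S.Nonempty := ⟨n, hnS⟩
  set γ' : ℕ := S.max' hSne with hγdef
  have hγS : γ' ∈ S := S.max'_mem hSne
  have hγC : γ' ∈ C := (Finset.mem_filter.1 hγS).1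
  have hγτ : tau G (-(σ' * q ^ γ')) ≤ tau G (σ' * q ^ n) := (Finset.mem_filter.1 hγS).2
  have hnγ : n ≤ γ' := S.le_max' n hnS
  have hq0 : (0:ℝ) < q := lt_trans zero_lt_one hq
  have heγ : (0:ℝ) < q ^ γ' := by positivity
  have hxn : (0:ℝ) < q ^ n := by positivity
  -- genuineness facts
  obtain ⟨hGw', hw'lam, hw'ge⟩ := covtauN hG hlam hq hcov hγC hσ'
  obtain ⟨hGF', hF'lam, hF'ge⟩ := covtauP hG hlam hq hcov hn hσ'
  -- Key 1 : chain lower bound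
  have key1 : 2 * Ab q l + q ^ γ' ≤ tau G (-(σ' * q ^ γ')) := by
    cases l with
    | nil => simpa [Ab] using hw'ge
    | cons hd tl =>
      obtain ⟨σ, hσ, h2, h3, h4⟩ := hg.2.2.2
      obtain ⟨hd1C, hd2C, hd12, hd1n⟩ := hg.2.1 hd (List.mem_cons_self)
      have hd2n : hd.2 < n := htop hd tl rfl
      obtain ⟨hGw, hwlam, hwge⟩ := covtauN hG hlam hq hcov hd2C hσ
      obtain ⟨hGFw, hFwlam, hFwge⟩ := covtauP hG hlam hq hcov hd1C hσ
      have hz0 : (0:ℝ) < q ^ hd.1 := by positivity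
      have he0 : (0:ℝ) < q ^ hd.2 := by positivity
      have hAtl : 0 ≤ Ab q tl := Ab_nonneg hq0 tl
      have hAl : Ab q (hd :: tl) = q ^ hd.2 + Ab q tl := by simp [Ab]
      by_cases hss : σ' = σ
      · subst hss
        -- same sign; first show tau G (σ'*q^hd.1) < w'
        have hFww' : tau G (σ' * q ^ hd.1) ≤ tau G (-(σ' * q ^ γ')) := by
          by_contra hcon
          push_neg at hcon
          have := h4 γ' hγC hcon.le
          omega
        -- chain: w + (z+e) ≤ Fw
        have gap1 : tau G (-(σ' * q ^ hd.2)) + (q ^ hd.1 + q ^ hd.2)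
            ≤ tau G (σ' * q ^ hd.1) := by
          have h := hG.gap h2 hGw hGFw
          have habs : |σ' * q ^ hd.1 - -(σ' * q ^ hd.2)| = q ^ hd.1 + q ^ hd.2 := by
            have : σ' * q ^ hd.1 - -(σ' * q ^ hd.2) = σ' * (q ^ hd.1 + q ^ hd.2) := by ring
            rw [this, sigabs hσ (by positivity)]
          rw [habs] at h; linarith
        have gap2 : tau G (σ' * q ^ hd.1) + (q ^ γ' + q ^ hd.1)
            ≤ tau G (-(σ' * q ^ γ')) := by
          have h := hG.gap hFww' hGFw hGw'
          have habs : |-(σ' * q ^ γ') - σ' * q ^ hd.1| = q ^ γ' + q ^ hd.1 := by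
            have : -(σ' * q ^ γ') - σ' * q ^ hd.1 = -(σ' * (q ^ γ' + q ^ hd.1)) := by ring
            rw [this, abs_neg, sigabs hσ (by positivity)]
          rw [habs] at h; linarith
        rw [hAl]; linarith
      · have hss' : σ' = -σ := by
          rcases hσ' with h | h <;> rcases hσ with h' | h' <;>
            simp [h, h'] at hss ⊢ <;> simp_all
        -- flip: w' = tau G (σ * q^γ')
        have hw'eq : -(σ' * q ^ γ') = σ * q ^ γ' := by rw [hss']; ring
        rw [hw'eq] at hGw' hw'ge hγτ ⊢
        have hmono : tau G (σ * q ^ hd.1) ≤ tau G (σ * q ^ γ') := by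
          apply hG.tau_mono hσ (one_le_pow₀ hq.le)
          · exact pow_le_pow_right₀ hq.le (le_of_lt (lt_of_lt_of_le (lt_of_le_of_lt hd12 hd2n) hnγ))
          · obtain ⟨t, _, hGt⟩ := hcov γ' hγC σ hσ
            exact ⟨t, hGt⟩
        have hww' : tau G (-(σ * q ^ hd.2)) ≤ tau G (σ * q ^ γ') := h2.trans hmono
        have gap1 : tau G (-(σ * q ^ hd.2)) + (q ^ hd.2 + q ^ γ')
            ≤ tau G (σ * q ^ γ') := by
          have h := hG.gap hww' hGw hGw'
          have habs : |σ * q ^ γ' - -(σ * q ^ hd.2)| = q ^ hd.2 + q ^ γ' := by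
            have : σ * q ^ γ' - -(σ * q ^ hd.2) = σ * (q ^ hd.2 + q ^ γ') := by ring
            rw [this, sigabs hσ (by positivity)]
          rw [habs] at h; linarith
        rw [hAl]; linarith
  -- Key 2 : the new cap
  have key2 : Ab q ((n, γ') :: l) ≤ c * q ^ n := by
    have gap3 : tau G (-(σ' * q ^ γ')) + (q ^ γ' + q ^ n) ≤ tau G (σ' * q ^ n) := by
      have h := hG.gap hγτ hGw' hGF'
      have habs : |σ' * q ^ n - -(σ' * q ^ γ')| = q ^ γ' + q ^ n := by
        have : σ' * q ^ n - -(σ' * q ^ γ') = σ' * (q ^ γ' + q ^ n) := by ring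
        rw [this, sigabs hσ' (by positivity)]
      rw [habs] at h; linarith
    have hAl : Ab q ((n, γ') :: l) = q ^ γ' + Ab q l := by simp [Ab]
    rw [hlam] at hF'lam
    rw [hAl]; nlinarith
  -- assemble Good
  refine ⟨γ', ⟨key2, hg.1⟩, ?_, ?_, ?_⟩
  · intro b hb
    rcases List.mem_cons.1 hb with rfl | hb'
    · exact ⟨hn, hγC, hnγ, Nat.lt_succ_self n⟩
    · obtain ⟨c1, c2, c3, c4⟩ := hg.2.1 b hb'
      exact ⟨c1, c2, c3, Nat.lt_succ_of_lt c4⟩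
  · intro m hm hmn
    rcases Nat.lt_succ_iff_lt_or_eq.1 hmn with h | rfl
    · obtain ⟨b, hb, hb'⟩ := hg.2.2.1 m hm h
      exact ⟨b, List.mem_cons_of_mem _ hb, hb'⟩
    · exact ⟨(m, γ'), List.mem_cons_self, le_rfl, hnγ⟩
  · exact ⟨σ', hσ', hγτ, key1, fun m hm hle => S.le_max' m (Finset.mem_filter.2 ⟨hm, hle⟩)⟩

lemma good_succ {n : ℕ} {l : List (ℕ × ℕ)} (hg : Good G c q C n l) :
    ∃ l', Good G c q C (n + 1) l' := by
  classical
  by_cases hn : n ∈ C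
  · have hlate : ∃ σ' : ℝ, (σ' = 1 ∨ σ' = -1) ∧
        tau G (-(σ' * q ^ n)) ≤ tau G (σ' * q ^ n) := by
      by_cases h : tau G (-(1 * q ^ n)) ≤ tau G (1 * q ^ n)
      · exact ⟨1, Or.inl rfl, h⟩
      · push_neg at h
        refine ⟨-1, Or.inr rfl, ?_⟩
        have e1 : -(-1 * q ^ n) = 1 * q ^ n := by ring
        have e2 : (-1 : ℝ) * q ^ n = -(1 * q ^ n) := by ring
        rw [e1, e2]
        exact h.le
    obtain ⟨σ', hσ', hl⟩ := hlate
    cases l with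
    | nil =>
      obtain ⟨γ', hγ⟩ := extendAux hG hlam hq hcov hn hg (by intro b tl h; cases h) hσ' hl
      exact ⟨_, hγ⟩
    | cons hd tl =>
      by_cases habs : n ≤ hd.2
      · refine ⟨hd :: tl, hg.1, ?_, ?_, hg.2.2.2⟩
        · intro b hb
          obtain ⟨c1, c2, c3, c4⟩ := hg.2.1 b hb
          exact ⟨c1, c2, c3, Nat.lt_succ_of_lt c4⟩
        · intro m hm hmn
          rcases Nat.lt_succ_iff_lt_or_eq.1 hmn with h | rfl
          · exact hg.2.2.1 m hm h
          · refine ⟨hd, List.mem_cons_self, ?_, habs⟩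
            exact le_of_lt (hg.2.1 hd (List.mem_cons_self)).2.2.2
      · push_neg at habs
        obtain ⟨γ', hγ⟩ := extendAux hG hlam hq hcov hn hg
          (by intro b tl' h; cases h; exact habs) hσ' hl
        exact ⟨_, hγ⟩
  · refine ⟨l, hg.1, ?_, ?_, hg.2.2.2⟩
    · intro b hb
      obtain ⟨c1, c2, c3, c4⟩ := hg.2.1 b hb
      exact ⟨c1, c2, c3, Nat.lt_succ_of_lt c4⟩
    · intro m hm hmn
      rcases Nat.lt_succ_iff_lt_or_eq.1 hmn with h | rfl
      · exact hg.2.2.1 m hm h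
      · exact absurd hm hn

lemma exists_good (N : ℕ) : ∃ l, Good G c q C N l := by
  induction N with
  | zero =>
    refine ⟨[], trivial, ?_, ?_, trivial⟩
    · intro b hb; cases hb
    · intro m _ hm; omega
  | succ n ih =>
    obtain ⟨l, hl⟩ := ih
    exact good_succ hG hlam hq hcov hl

end Blocks


lemma Ab_one {q : ℝ} (hq : 1 ≤ q) {l : List (ℕ × ℕ)} (hl : l ≠ []) : 1 ≤ Ab q l := by
  cases l with
  | nil => exact absurd rfl hl
  | cons b tl =>
    have h1 : Ab q (b :: tl) = q ^ b.2 + Ab q tl := by simp [Ab]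
    have h2 : (1:ℝ) ≤ q ^ b.2 := one_le_pow₀ hq
    have h3 := Ab_nonneg (lt_of_lt_of_le zero_lt_one hq) tl
    linarith

/-- Weighted AM-GM in the form we need. -/
lemma amgm (k s : ℕ) (hk : 1 ≤ k) (hs : 1 ≤ s) (x y : ℝ) (hx : 0 ≤ x) (hy : 0 ≤ y) :
    ((k + s : ℕ) : ℝ) ^ (k + s) * (x ^ k * y ^ s) ≤
      (s : ℝ) ^ s * (k : ℝ) ^ k * (x + y) ^ (k + s) := by
  have hk0 : (0:ℝ) < k := by exact_mod_cast hk
  have hs0 : (0:ℝ) < s := by exact_mod_cast hs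
  have hT0 : (0:ℝ) < (k:ℝ) + s := by linarith
  rcases eq_or_lt_of_le hx with rfl | hx0
  · have : (0:ℝ) ^ k = 0 := zero_pow (by omega)
    rw [this]
    have : (0:ℝ) ≤ (s : ℝ) ^ s * (k : ℝ) ^ k * (0 + y) ^ (k + s) := by positivity
    nlinarith
  rcases eq_or_lt_of_le hy with rfl | hy0
  · have : (0:ℝ) ^ s = 0 := zero_pow (by omega)
    rw [this]
    have : (0:ℝ) ≤ (s : ℝ) ^ s * (k : ℝ) ^ k * (x + 0) ^ (k + s) := by positivity
    nlinarith
  -- main case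
  set T : ℝ := (k:ℝ) + s with hT
  set p₁ : ℝ := T * x / k with hp₁
  set p₂ : ℝ := T * y / s with hp₂
  have hp₁0 : 0 ≤ p₁ := by positivity
  have hp₂0 : 0 ≤ p₂ := by positivity
  have hw : (k:ℝ)/T + (s:ℝ)/T = 1 := by field_simp; rw [hT]
  have hgm := Real.geom_mean_le_arith_mean2_weighted
    (by positivity : (0:ℝ) ≤ (k:ℝ)/T) (by positivity : (0:ℝ) ≤ (s:ℝ)/T) hp₁0 hp₂0 hw
  have harith : (k:ℝ)/T * p₁ + (s:ℝ)/T * p₂ = x + y := by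
    rw [hp₁, hp₂]; field_simp
  rw [harith] at hgm
  -- raise to the T power
  have hgmT : (p₁ ^ ((k:ℝ)/T) * p₂ ^ ((s:ℝ)/T)) ^ T ≤ (x + y) ^ T := by
    apply Real.rpow_le_rpow (by positivity) hgm (le_of_lt hT0)
  have hlhs : (p₁ ^ ((k:ℝ)/T) * p₂ ^ ((s:ℝ)/T)) ^ T = p₁ ^ (k:ℕ) * p₂ ^ (s:ℕ) := by
    rw [Real.mul_rpow (Real.rpow_nonneg hp₁0 _) (Real.rpow_nonneg hp₂0 _),
      ← Real.rpow_natCast p₁ k, ← Real.rpow_natCast p₂ s,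
      ← Real.rpow_mul hp₁0, ← Real.rpow_mul hp₂0]
    rw [div_mul_cancel₀ _ (ne_of_gt hT0), div_mul_cancel₀ _ (ne_of_gt hT0)]
  have hrhs : (x + y) ^ T = (x + y) ^ (k + s : ℕ) := by
    rw [← Real.rpow_natCast (x+y) (k+s)]
    congr 1
    push_cast
    rw [hT]
  rw [hlhs, hrhs] at hgmT
  -- expand p₁, p₂ powers
  have hexp : p₁ ^ (k:ℕ) * p₂ ^ (s:ℕ) =
      T ^ (k + s : ℕ) * (x ^ k * y ^ s) / ((k:ℝ) ^ k * (s:ℝ) ^ s) := by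
    rw [hp₁, hp₂, div_pow, div_pow, mul_pow, mul_pow, pow_add]
    field_simp
  rw [hexp] at hgmT
  have hTcast : ((k + s : ℕ) : ℝ) = T := by push_cast; rw [hT]
  rw [hTcast]
  have hden : (0:ℝ) < (k:ℝ) ^ k * (s:ℝ) ^ s := by positivity
  rw [div_le_iff₀ hden] at hgmT
  calc T ^ (k + s) * (x ^ k * y ^ s) ≤ (x + y) ^ (k + s) * ((k:ℝ) ^ k * (s:ℝ) ^ s) := hgmT
    _ = (s : ℝ) ^ s * (k : ℝ) ^ k * (x + y) ^ (k + s) := by ring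

section Count

variable {q c M : ℝ} {k s : ℕ}

lemma caps_top (hq : 0 < q) {l : List (ℕ × ℕ)} (hcaps : capsOK q c l) :
    ∀ b ∈ l, q ^ b.2 ≤ c * q ^ b.1 := by
  induction l with
  | nil => intro b hb; cases hb
  | cons hd tl ih =>
    intro b hb
    rcases List.mem_cons.1 hb with rfl | hb'
    · have h1 : Ab q (b :: tl) = q ^ b.2 + Ab q tl := by simp [Ab]
      have h2 := Ab_nonneg hq tl
      have := hcaps.1
      linarith
    · exact ih hcaps.2 b hb'

lemma caps_log (hq : 1 < q) (hc : 1 ≤ c) (hk : 1 ≤ k) (hM0 : 0 < M)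
    (hAM : ∀ x y : ℝ, 0 ≤ x → 0 ≤ y → c ^ k * (x ^ k * y ^ s) ≤ M * (x + y) ^ (k + s)) :
    ∀ l : List (ℕ × ℕ), (∀ b ∈ l, b.1 ≤ b.2) → capsOK q c l → l ≠ [] →
    (k : ℝ) * Real.log q * (l.map fun b => ((b.2 - b.1 : ℕ) : ℝ)).sum ≤
      (s : ℝ) * Real.log (Ab q l) + ((l.length : ℝ) - 1) * Real.log M +
        (k : ℝ) * Real.log c := by
  have hq0 : (0:ℝ) < q := lt_trans zero_lt_one hq
  have hlogq : 0 < Real.log q := Real.log_pos hq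
  have hc0 : (0:ℝ) < c := lt_of_lt_of_le zero_lt_one hc
  have hk0 : (1:ℝ) ≤ (k:ℝ) := by exact_mod_cast hk
  intro l
  induction l with
  | nil => intro _ _ hl; exact absurd rfl hl
  | cons b tl ih =>
    intro hblk hcaps _
    have hb12 : b.1 ≤ b.2 := hblk b (List.mem_cons_self)
    have hAcons : Ab q (b :: tl) = q ^ b.2 + Ab q tl := by simp [Ab]
    have hcap : Ab q (b :: tl) ≤ c * q ^ b.1 := hcaps.1
    have hcast : ((b.2 - b.1 : ℕ) : ℝ) = (b.2 : ℝ) - (b.1 : ℝ) := by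
      exact Nat.cast_sub hb12
    have he0 : (0:ℝ) < q ^ b.2 := by positivity
    have hz0 : (0:ℝ) < q ^ b.1 := by positivity
    cases tl with
    | nil =>
      have hA : Ab q [b] = q ^ b.2 := by simp [Ab]
      have hlogA : 0 ≤ Real.log (Ab q [b]) := Real.log_nonneg (Ab_one hq.le (by simp))
      have h1 : q ^ b.2 ≤ c * q ^ b.1 := by rw [← hA]; exact hcap
      have h2 : (b.2:ℝ) * Real.log q ≤ Real.log c + (b.1:ℝ) * Real.log q := by
        have h3 := Real.log_le_log he0 h1
        rw [Real.log_pow, Real.log_mul (ne_of_gt hc0) (by positivity), Real.log_pow] at h3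
        exact_mod_cast h3
      simp only [List.map_cons, List.map_nil, List.sum_cons, List.sum_nil, add_zero,
        List.length_cons, List.length_nil]
      rw [hcast]
      have hs0 : (0:ℝ) ≤ (s:ℝ) := Nat.cast_nonneg s
      have hmul : (k:ℝ) * Real.log q * ((b.2:ℝ) - (b.1:ℝ)) ≤ (k:ℝ) * Real.log c := by
        have : Real.log q * ((b.2:ℝ) - (b.1:ℝ)) ≤ Real.log c := by linarith
        nlinarith [Real.log_nonneg hc]
      have : (0:ℝ) ≤ (s:ℝ) * Real.log (Ab q [b]) := mul_nonneg hs0 hlogA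
      push_cast
      nlinarith
    | cons b2 tl2 =>
      have hne2 : (b2 :: tl2) ≠ ([] : List (ℕ × ℕ)) := by simp
      have hAtl1 : (1:ℝ) ≤ Ab q (b2 :: tl2) := Ab_one hq.le hne2
      have hAtl0 : (0:ℝ) < Ab q (b2 :: tl2) := lt_of_lt_of_le zero_lt_one hAtl1
      have hAt0 : (0:ℝ) < Ab q (b :: b2 :: tl2) := by rw [hAcons]; positivity
      have hkey := hAM (q ^ b.2) (Ab q (b2 :: tl2)) (le_of_lt he0) (le_of_lt hAtl0)
      rw [← hAcons] at hkey
      have hmono : (Ab q (b :: b2 :: tl2)) ^ k ≤ (c * q ^ b.1) ^ k :=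
        pow_le_pow_left₀ (le_of_lt hAt0) hcap k
      have hck : (0:ℝ) < c ^ k := by positivity
      have hchain : c ^ k * ((q ^ b.2) ^ k * (Ab q (b2 :: tl2)) ^ s) ≤
          M * (Ab q (b :: b2 :: tl2)) ^ s * (c ^ k * (q ^ b.1) ^ k) := by
        have hpow : (Ab q (b :: b2 :: tl2)) ^ (k + s) =
            (Ab q (b :: b2 :: tl2)) ^ k * (Ab q (b :: b2 :: tl2)) ^ s := pow_add _ k s
        have hMs : (0:ℝ) ≤ M * (Ab q (b :: b2 :: tl2)) ^ s := by positivity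
        calc c ^ k * ((q ^ b.2) ^ k * (Ab q (b2 :: tl2)) ^ s)
            ≤ M * (Ab q (b :: b2 :: tl2)) ^ (k + s) := hkey
          _ = M * (Ab q (b :: b2 :: tl2)) ^ s * (Ab q (b :: b2 :: tl2)) ^ k := by
              rw [hpow]; ring
          _ ≤ M * (Ab q (b :: b2 :: tl2)) ^ s * (c * q ^ b.1) ^ k := by
              exact mul_le_mul_of_nonneg_left hmono hMs
          _ = M * (Ab q (b :: b2 :: tl2)) ^ s * (c ^ k * (q ^ b.1) ^ k) := by
              rw [mul_pow]
      have hcancel : (q ^ b.2) ^ k * (Ab q (b2 :: tl2)) ^ s ≤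
          M * (Ab q (b :: b2 :: tl2)) ^ s * (q ^ b.1) ^ k := by
        nlinarith
      -- take logs
      have hlhs0 : (0:ℝ) < (q ^ b.2) ^ k * (Ab q (b2 :: tl2)) ^ s := by positivity
      have hlog := Real.log_le_log hlhs0 hcancel
      rw [Real.log_mul (by positivity) (by positivity),
        Real.log_mul (by positivity) (by positivity),
        Real.log_mul (ne_of_gt hM0) (by positivity),
        Real.log_pow, Real.log_pow, Real.log_pow, Real.log_pow, Real.log_pow] at hlog
      -- hlog : k*(b.2*logq) + s*log Atl ≤ (log M + s*log At) + k*(b.1*logq)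
      have hstep : (k:ℝ) * Real.log q * (((b.2:ℝ)) - (b.1:ℝ)) ≤
          Real.log M + (s:ℝ) * (Real.log (Ab q (b :: b2 :: tl2)) -
            Real.log (Ab q (b2 :: tl2))) := by
        rw [Real.log_pow] at hlog
        nlinarith [hlog]
      have hih := ih (fun b' hb' => hblk b' (List.mem_cons_of_mem _ hb')) hcaps.2 hne2
      rw [List.map_cons, List.sum_cons, List.length_cons, hcast]
      have hexpand : (k:ℝ) * Real.log q *
          (((b.2:ℝ) - (b.1:ℝ)) + ((b2 :: tl2).map fun b' => ((b'.2 - b'.1 : ℕ) : ℝ)).sum) =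
          (k:ℝ) * Real.log q * ((b.2:ℝ) - (b.1:ℝ)) +
          (k:ℝ) * Real.log q * ((b2 :: tl2).map fun b' => ((b'.2 - b'.1 : ℕ) : ℝ)).sum := by
        ring
      push_cast at hih ⊢
      linarith [hih, hstep, hexpand]


end Count

lemma robot_bound {q c M : ℝ} {k s : ℕ} (hq : 1 < q) (hc : 1 ≤ c) (hk : 1 ≤ k)
    (hM0 : 0 < M) (hMlog : Real.log M = -(2 * (k : ℝ)) * Real.log q)
    (hAM : ∀ x y : ℝ, 0 ≤ x → 0 ≤ y → c ^ k * (x ^ k * y ^ s) ≤ M * (x + y) ^ (k + s))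
    {N : ℕ} {l : List (ℕ × ℕ)}
    (hblk : ∀ b ∈ l, b.1 ≤ b.2) (hβN : ∀ b ∈ l, b.1 ≤ N) (hcaps : capsOK q c l) :
    (k : ℝ) * ((l.map fun b => ((b.2 - b.1 : ℕ) : ℝ)).sum + 2 * l.length) ≤
      (s : ℝ) * (Real.log c / Real.log q) + (s : ℝ) * N +
        (k : ℝ) * (Real.log c / Real.log q) + 2 * k := by
  have hlogq : 0 < Real.log q := Real.log_pos hq
  have hlogc : 0 ≤ Real.log c := Real.log_nonneg hc
  have hc0 : (0:ℝ) < c := lt_of_lt_of_le zero_lt_one hc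
  have hD0 : 0 ≤ Real.log c / Real.log q := div_nonneg hlogc hlogq.le
  have hk1 : (1:ℝ) ≤ (k:ℝ) := by exact_mod_cast hk
  have hs0 : (0:ℝ) ≤ (s:ℝ) := Nat.cast_nonneg s
  cases l with
  | nil =>
    simp only [List.map_nil, List.sum_nil, List.length_nil, Nat.cast_zero, mul_zero, zero_add]
    have : (0:ℝ) ≤ (s:ℝ) * (N:ℕ) := by positivity
    nlinarith
  | cons b tl =>
    have hlog := caps_log (s := s) hq hc hk hM0 hAM (b :: tl) hblk hcaps (by simp)
    have hA1 : (1:ℝ) ≤ Ab q (b :: tl) := Ab_one hq.le (by simp)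
    have hA0 : (0:ℝ) < Ab q (b :: tl) := lt_of_lt_of_le zero_lt_one hA1
    have hcap : Ab q (b :: tl) ≤ c * q ^ b.1 := hcaps.1
    have hqN : q ^ b.1 ≤ q ^ N := pow_le_pow_right₀ hq.le (hβN b (List.mem_cons_self))
    have hAcqN : Ab q (b :: tl) ≤ c * q ^ N := le_trans hcap (by nlinarith)
    have hlogA : Real.log (Ab q (b :: tl)) ≤ Real.log c + (N : ℝ) * Real.log q := by
      have h := Real.log_le_log hA0 hAcqN
      rwa [Real.log_mul (ne_of_gt hc0) (by positivity), Real.log_pow] at h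
    have hsA : (s:ℝ) * Real.log (Ab q (b :: tl)) ≤
        (s:ℝ) * (Real.log c + (N : ℝ) * Real.log q) :=
      mul_le_mul_of_nonneg_left hlogA hs0
    rw [hMlog] at hlog
    have hm1 : (1:ℝ) ≤ ((b :: tl).length : ℝ) := by
      simp only [List.length_cons]; push_cast; linarith [Nat.cast_nonneg (α := ℝ) tl.length]
    have H : ((k : ℝ) * (((b :: tl).map fun b' => ((b'.2 - b'.1 : ℕ) : ℝ)).sum +
          2 * ((b :: tl).length : ℝ))) * Real.log q ≤
        ((s : ℝ) * (Real.log c / Real.log q) + (s : ℝ) * N +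
          (k : ℝ) * (Real.log c / Real.log q) + 2 * k) * Real.log q := by
      have hDlog : Real.log c / Real.log q * Real.log q = Real.log c :=
        div_mul_cancel₀ _ (ne_of_gt hlogq)
      have hexp : ((s : ℝ) * (Real.log c / Real.log q) + (s : ℝ) * N +
          (k : ℝ) * (Real.log c / Real.log q) + 2 * k) * Real.log q =
          (s:ℝ) * Real.log c + (s:ℝ) * N * Real.log q + (k:ℝ) * Real.log c +
            2 * k * Real.log q := by
        field_simp
      rw [hexp]
      nlinarith [hlog, hsA]
    exact le_of_mul_le_mul_right H hlogq

lemma span_le {q c : ℝ} (hq : 1 < q) (hc : 1 ≤ c) {l : List (ℕ × ℕ)}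
    (hcaps : capsOK q c l) (hblk : ∀ b ∈ l, b.1 ≤ b.2) :
    ∀ b ∈ l, ((b.2 - b.1 : ℕ) : ℝ) ≤ Real.log c / Real.log q := by
  intro b hb
  have hlogq : 0 < Real.log q := Real.log_pos hq
  have hc0 : (0:ℝ) < c := lt_of_lt_of_le zero_lt_one hc
  have h1 := caps_top (lt_trans zero_lt_one hq) hcaps b hb
  have h2 := Real.log_le_log (by positivity) h1
  rw [Real.log_mul (ne_of_gt hc0) (by positivity), Real.log_pow, Real.log_pow] at h2
  rw [Nat.cast_sub (hblk b hb), le_div_iff₀ hlogq]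
  nlinarith

def Bset : List (ℕ × ℕ) → Finset ℕ
  | [] => ∅
  | b :: tl => Finset.Icc b.1 b.2 ∪ Bset tl

lemma mem_Bset {l : List (ℕ × ℕ)} {n : ℕ} (h : ∃ b ∈ l, b.1 ≤ n ∧ n ≤ b.2) :
    n ∈ Bset l := by
  induction l with
  | nil => obtain ⟨b, hb, _⟩ := h; cases hb
  | cons hd tl ih =>
    obtain ⟨b, hb, h1, h2⟩ := h
    rcases List.mem_cons.1 hb with rfl | hb'
    · exact Finset.mem_union_left _ (Finset.mem_Icc.2 ⟨h1, h2⟩)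
    · exact Finset.mem_union_right _ (ih ⟨b, hb', h1, h2⟩)

lemma Bset_card (l : List (ℕ × ℕ)) :
    (Bset l).card ≤ (l.map fun b => b.2 - b.1 + 1).sum := by
  induction l with
  | nil => simp [Bset]
  | cons hd tl ih =>
    have h1 : (Bset (hd :: tl)).card ≤ (Finset.Icc hd.1 hd.2).card + (Bset tl).card :=
      Finset.card_union_le _ _
    have h2 : (Finset.Icc hd.1 hd.2).card = hd.2 + 1 - hd.1 := Nat.card_Icc _ _
    simp only [List.map_cons, List.sum_cons]
    omega

lemma Bcard_real (l : List (ℕ × ℕ)) :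
    ((Bset l).card : ℝ) ≤ (l.map fun b => ((b.2 - b.1 : ℕ) : ℝ)).sum + l.length := by
  induction l with
  | nil => simp [Bset]
  | cons hd tl ih =>
    have h1 : ((Bset (hd :: tl)).card : ℕ) ≤ (Finset.Icc hd.1 hd.2).card + (Bset tl).card :=
      Finset.card_union_le _ _
    have h2 : (Finset.Icc hd.1 hd.2).card = hd.2 + 1 - hd.1 := Nat.card_Icc _ _
    have h3 : ((Finset.Icc hd.1 hd.2).card : ℝ) ≤ ((hd.2 - hd.1 : ℕ) : ℝ) + 1 := by
      rw [h2]
      have : hd.2 + 1 - hd.1 ≤ (hd.2 - hd.1) + 1 := by omega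
      exact_mod_cast this
    simp only [List.map_cons, List.sum_cons, List.length_cons]
    push_cast
    have h1' : ((Bset (hd :: tl)).card : ℝ) ≤
        ((Finset.Icc hd.1 hd.2).card : ℝ) + ((Bset tl).card : ℝ) := by exact_mod_cast h1
    linarith

lemma sum_le_len (l : List (ℕ × ℕ)) (f : ℕ × ℕ → ℝ) (Dv : ℝ)
    (h : ∀ b ∈ l, f b ≤ Dv) : (l.map f).sum ≤ l.length * Dv := by
  induction l with
  | nil => simp
  | cons hd tl ih =>
    simp only [List.map_cons, List.sum_cons, List.length_cons]
    have h1 := h hd (List.mem_cons_self)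
    have h2 := ih fun b hb => h b (List.mem_cons_of_mem _ hb)
    push_cast
    linarith



end SLC

/-- Lower bound for `s`-fold symmetric line covering: if `k` robot trajectories
(1-Lipschitz, starting at 0) are such that every `x ≥ 1` has both `x` and `-x`
visited within time `λx` by at least `s` of them, then
`λ ≥ 2 ((k+s)^(k+s)/(s^s k^k))^(1/k) + 1`. -/
theorem symmetric_line_cover_lower_bound
    (k s : ℕ) (hs : 1 ≤ s) (hsk : s ≤ k)
    (lam : ℝ) (hlam : 1 < lam)
    (g : Fin k → ℝ≥0 → ℝ)
    (hlip : ∀ r, LipschitzWith 1 (g r))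
    (h0 : ∀ r, g r 0 = 0)
    (hcov : ∀ x : ℝ, 1 ≤ x →
      s ≤ {r : Fin k | ∃ t₁ t₂ : ℝ≥0, (t₁ : ℝ) ≤ lam * x ∧ (t₂ : ℝ) ≤ lam * x ∧
            g r t₁ = x ∧ g r t₂ = -x}.ncard) :
    2 * (((k + s : ℕ) : ℝ) ^ (k + s) / ((s : ℝ) ^ s * (k : ℝ) ^ k)) ^ ((1 : ℝ) / k) + 1
      ≤ lam := by
  classical
  have hk : 1 ≤ k := le_trans hs hsk
  -- the real-extended trajectories
  set G : Fin k → ℝ → ℝ := fun r t => g r (Real.toNNReal t) with hGdef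
  have hpath : ∀ r, SLC.Path (G r) := by
    intro r
    constructor
    · have h := (hlip r).comp Real.lipschitzWith_toNNReal
      simp at h; exact h
    · intro t ht
      simp only [hGdef]
      rw [Real.toNNReal_of_nonpos ht]
      exact h0 r
  -- lam ≥ 3
  have hlam3 : 3 ≤ lam := by
    have h1 := hcov 1 le_rfl
    have hne : {r : Fin k | ∃ t₁ t₂ : ℝ≥0, (t₁ : ℝ) ≤ lam * 1 ∧ (t₂ : ℝ) ≤ lam * 1 ∧
        g r t₁ = 1 ∧ g r t₂ = -1}.Nonempty := by
      apply Set.nonempty_of_ncard_ne_zero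
      omega
    obtain ⟨r, t₁, t₂, h₁, h₂, hg1, hg2⟩ := hne
    have e1 : G r ↑t₁ = 1 := by simp only [hGdef]; rw [Real.toNNReal_coe]; exact hg1
    have e2 : G r ↑t₂ = -1 := by simp only [hGdef]; rw [Real.toNNReal_coe]; exact hg2
    have l1 : (1:ℝ) ≤ ↑t₁ := by
      have h := (hpath r).mem_lb (v := 1) (by norm_num) e1
      simpa using h
    have l2 : (1:ℝ) ≤ ↑t₂ := by
      have h := (hpath r).mem_lb (v := -1) (by norm_num) e2
      simpa using h
    rcases le_total (↑t₁ : ℝ) ↑t₂ with h | h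
    · have hg := (hpath r).gap h e1 e2
      have : |(-1 : ℝ) - 1| = 2 := by norm_num
      rw [this] at hg
      have := h₂
      linarith
    · have hg := (hpath r).gap h e2 e1
      have : |(1 : ℝ) - (-1)| = 2 := by norm_num
      rw [this] at hg
      have := h₁
      linarith
  -- contradiction setup
  by_contra hcon
  push_neg at hcon
  set Qv : ℝ := ((k + s : ℕ) : ℝ) ^ (k + s) / ((s : ℝ) ^ s * (k : ℝ) ^ k) with hQv
  set c : ℝ := (lam - 1) / 2 with hcdef
  have hlameq : lam = 1 + 2 * c := by rw [hcdef]; ring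
  have hc1 : 1 ≤ c := by rw [hcdef]; linarith
  have hc0 : (0:ℝ) < c := lt_of_lt_of_le zero_lt_one hc1
  have hs1 : (1:ℝ) ≤ (s:ℝ) := by exact_mod_cast hs
  have hk1 : (1:ℝ) ≤ (k:ℝ) := by exact_mod_cast hk
  have hk0 : (k:ℝ) ≠ 0 := by positivity
  have hks0 : (0:ℝ) < ((k + s : ℕ) : ℝ) := by
    have : 0 < k + s := by omega
    exact_mod_cast this
  have hQ0 : 0 < Qv := by rw [hQv]; positivity
  have hQexp : (Qv ^ ((1:ℝ)/k)) ^ k = Qv := by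
    rw [← Real.rpow_natCast (Qv ^ ((1:ℝ)/k)) k, ← Real.rpow_mul hQ0.le, one_div,
      inv_mul_cancel₀ hk0, Real.rpow_one]
  have hcρ : c < Qv ^ ((1:ℝ)/k) := by rw [hcdef]; linarith
  have hcQK : c ^ k < Qv := by
    calc c ^ k < (Qv ^ ((1:ℝ)/k)) ^ k :=
          pow_lt_pow_left₀ hcρ (le_of_lt hc0) (by omega)
      _ = Qv := hQexp
  set M : ℝ := c ^ k / Qv with hMdef
  have hM0 : 0 < M := by positivity
  have hM1 : M < 1 := (div_lt_one hQ0).2 hcQK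
  have hAM : ∀ x y : ℝ, 0 ≤ x → 0 ≤ y →
      c ^ k * (x ^ k * y ^ s) ≤ M * (x + y) ^ (k + s) := by
    intro x y hx hy
    have h1 := SLC.amgm k s hk hs x y hx hy
    have hden : (0:ℝ) < (s:ℝ) ^ s * (k:ℝ) ^ k := by positivity
    have h2 : Qv * (x ^ k * y ^ s) ≤ (x + y) ^ (k + s) := by
      rw [hQv, div_mul_eq_mul_div, div_le_iff₀ hden]
      nlinarith [h1]
    calc c ^ k * (x ^ k * y ^ s) = (c ^ k / Qv) * (Qv * (x ^ k * y ^ s)) := by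
          field_simp
      _ ≤ (c ^ k / Qv) * (x + y) ^ (k + s) :=
          mul_le_mul_of_nonneg_left h2 (by positivity)
      _ = M * (x + y) ^ (k + s) := by rw [hMdef]
  set q : ℝ := M ^ (-(1 / (2 * (k:ℝ)))) with hqdef
  have hexpneg : -(1 / (2 * (k:ℝ))) < 0 := by
    have : (0:ℝ) < 1 / (2 * (k:ℝ)) := by positivity
    linarith
  have hq1 : 1 < q := by
    rw [hqdef]
    exact (Real.one_lt_rpow_iff_of_pos hM0).2 (Or.inr ⟨hM1, hexpneg⟩)
  have hMlog : Real.log M = -(2 * (k:ℝ)) * Real.log q := by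
    rw [hqdef, Real.log_rpow hM0]
    field_simp
  set D : ℝ := Real.log c / Real.log q with hDdef
  have hlogq : 0 < Real.log q := Real.log_pos hq1
  have hD0 : 0 ≤ D := div_nonneg (Real.log_nonneg hc1) hlogq.le
  set N : ℕ := ⌈(D + 1) * (((s:ℝ) + (k:ℝ)) * D + 2 * (k:ℝ))⌉₊ with hNdef
  -- the covering predicate on grid levels
  set CovP : Fin k → ℕ → Prop := fun r n => ∃ t₁ t₂ : ℝ≥0, (t₁ : ℝ) ≤ lam * q ^ n ∧
      (t₂ : ℝ) ≤ lam * q ^ n ∧ g r t₁ = q ^ n ∧ g r t₂ = -(q ^ n) with hCovP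
  set C : Fin k → Finset ℕ := fun r => (Finset.range (N+1)).filter (CovP r) with hCdef
  have hcovG : ∀ r, ∀ m ∈ C r, ∀ σ : ℝ, σ = 1 ∨ σ = -1 →
      ∃ t, t ≤ lam * q ^ m ∧ G r t = σ * q ^ m := by
    intro r m hm σ hσ
    have hm' := (Finset.mem_filter.1 hm).2
    rw [hCovP] at hm'
    obtain ⟨t₁, t₂, h₁, h₂, hg1, hg2⟩ := hm'
    rcases hσ with rfl | rfl
    · refine ⟨↑t₁, h₁, ?_⟩
      simp only [hGdef]; rw [Real.toNNReal_coe, hg1]; ring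
    · refine ⟨↑t₂, h₂, ?_⟩
      simp only [hGdef]; rw [Real.toNNReal_coe, hg2]; ring
  -- per robot block data
  have hgood : ∀ r, ∃ l, SLC.Good (G r) c q (C r) (N+1) l := fun r =>
    SLC.exists_good (hpath r) hlameq hq1 (hcovG r) (N+1)
  choose L hL using hgood
  -- per-robot numeric bound
  have hblk12 : ∀ r, ∀ b ∈ L r, b.1 ≤ b.2 := fun r b hb => ((hL r).2.1 b hb).2.2.1
  have hβN : ∀ r, ∀ b ∈ L r, b.1 ≤ N := by
    intro r b hb
    have h1 := ((hL r).2.1 b hb).1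
    have h2 := (Finset.mem_filter.1 h1).1
    exact Nat.lt_succ_iff.1 (Finset.mem_range.1 h2)
  have hRB : ∀ r, (k : ℝ) * (((L r).map fun b => ((b.2 - b.1 : ℕ) : ℝ)).sum +
      2 * (L r).length) ≤ (s : ℝ) * D + (s : ℝ) * N + (k : ℝ) * D + 2 * k := by
    intro r
    have h := SLC.robot_bound (s := s) hq1 hc1 hk hM0 hMlog hAM
      (hblk12 r) (hβN r) (hL r).1
    rw [hDdef]
    exact h
  have hsubC : ∀ r, C r ⊆ SLC.Bset (L r) := by
    intro r n hn
    have hlt : n < N + 1 := Finset.mem_range.1 (Finset.mem_filter.1 hn).1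
    exact SLC.mem_Bset ((hL r).2.2.1 n hn hlt)
  have hcard1 : ∀ r, ((C r).card : ℝ) ≤
      ((L r).map fun b => ((b.2 - b.1 : ℕ) : ℝ)).sum + (L r).length := by
    intro r
    have h1 : (C r).card ≤ (SLC.Bset (L r)).card := Finset.card_le_card (hsubC r)
    have h2 := SLC.Bcard_real (L r)
    have h1' : ((C r).card : ℝ) ≤ ((SLC.Bset (L r)).card : ℝ) := by exact_mod_cast h1
    linarith
  -- global coverage count : s-fold
  have hsN : ∀ n ∈ Finset.range (N+1),
      s ≤ (Finset.univ.filter (fun r => CovP r n)).card := by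
    intro n _
    have hx1 : (1:ℝ) ≤ q ^ n := one_le_pow₀ hq1.le
    have h := hcov (q ^ n) hx1
    have hset : {r : Fin k | ∃ t₁ t₂ : ℝ≥0, (t₁ : ℝ) ≤ lam * q ^ n ∧
        (t₂ : ℝ) ≤ lam * q ^ n ∧ g r t₁ = q ^ n ∧ g r t₂ = -(q ^ n)} =
        ↑(Finset.univ.filter (fun r => CovP r n)) := by
      ext r
      simp [hCovP]
    rw [hset, Set.ncard_coe_finset] at h
    exact h
  have hswap : ∑ n ∈ Finset.range (N+1), (Finset.univ.filter (fun r => CovP r n)).card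
      = ∑ r : Fin k, (C r).card := by
    simp_rw [hCdef, Finset.card_filter]
    exact Finset.sum_comm
  have hsNtot : (s * (N + 1) : ℕ) ≤ ∑ r : Fin k, (C r).card := by
    rw [← hswap]
    calc s * (N + 1) = ∑ _n ∈ Finset.range (N+1), s := by
          rw [Finset.sum_const, Finset.card_range, smul_eq_mul, mul_comm]
      _ ≤ ∑ n ∈ Finset.range (N+1), (Finset.univ.filter (fun r => CovP r n)).card :=
          Finset.sum_le_sum hsN
  -- sum per-robot bounds
  set SC : ℝ := ∑ r : Fin k, ((C r).card : ℝ) with hSC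
  set SM : ℝ := ∑ r : Fin k, ((L r).length : ℝ) with hSM
  have hSC0 : (s:ℝ) * ((N:ℝ) + 1) ≤ SC := by
    rw [hSC]
    have : ((s * (N + 1) : ℕ) : ℝ) ≤ ((∑ r : Fin k, (C r).card : ℕ) : ℝ) := by
      exact_mod_cast hsNtot
    push_cast at this
    linarith
  have hsum1 : SC + SM ≤ (s : ℝ) * D + (s : ℝ) * N + (k : ℝ) * D + 2 * k := by
    have hper : ∀ r : Fin k, (k:ℝ) * (((C r).card : ℝ) + ((L r).length : ℝ)) ≤
        (s : ℝ) * D + (s : ℝ) * N + (k : ℝ) * D + 2 * k := by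
      intro r
      have h1 := hcard1 r
      have h2 := hRB r
      have h3 : ((C r).card : ℝ) + ((L r).length : ℝ) ≤
          ((L r).map fun b => ((b.2 - b.1 : ℕ) : ℝ)).sum + 2 * (L r).length := by
        linarith
      calc (k:ℝ) * (((C r).card : ℝ) + ((L r).length : ℝ))
          ≤ (k:ℝ) * (((L r).map fun b => ((b.2 - b.1 : ℕ) : ℝ)).sum + 2 * (L r).length) :=
            mul_le_mul_of_nonneg_left h3 (by linarith)
        _ ≤ (s : ℝ) * D + (s : ℝ) * N + (k : ℝ) * D + 2 * k := h2
    have hsum : ∑ r : Fin k, ((k:ℝ) * (((C r).card : ℝ) + ((L r).length : ℝ))) ≤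
        (k:ℝ) * ((s : ℝ) * D + (s : ℝ) * N + (k : ℝ) * D + 2 * k) := by
      calc ∑ r : Fin k, ((k:ℝ) * (((C r).card : ℝ) + ((L r).length : ℝ)))
          ≤ ∑ _r : Fin k, ((s : ℝ) * D + (s : ℝ) * N + (k : ℝ) * D + 2 * k) :=
            Finset.sum_le_sum (fun r _ => hper r)
        _ = (k:ℝ) * ((s : ℝ) * D + (s : ℝ) * N + (k : ℝ) * D + 2 * k) := by
            rw [Finset.sum_const, Finset.card_univ, Fintype.card_fin, nsmul_eq_mul]
    have hdistr : ∑ r : Fin k, ((k:ℝ) * (((C r).card : ℝ) + ((L r).length : ℝ)))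
        = (k:ℝ) * (SC + SM) := by
      rw [hSC, hSM, ← Finset.mul_sum, ← Finset.sum_add_distrib]
    rw [hdistr] at hsum
    have hkpos : (0:ℝ) < (k:ℝ) := by linarith
    exact le_of_mul_le_mul_left hsum hkpos
  -- global block coverage
  have hglob : ((N:ℝ) + 1) ≤ (D + 1) * SM := by
    have hcover : Finset.range (N+1) ⊆ Finset.univ.biUnion (fun r => SLC.Bset (L r)) := by
      intro n hn
      have h := hsN n hn
      have hne : (Finset.univ.filter (fun r => CovP r n)).Nonempty := by
        rw [← Finset.card_pos]; omega
      obtain ⟨r, hr⟩ := hne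
      have hrC : n ∈ C r := by
        rw [hCdef]
        exact Finset.mem_filter.2 ⟨hn, (Finset.mem_filter.1 hr).2⟩
      exact Finset.mem_biUnion.2 ⟨r, Finset.mem_univ r, hsubC r hrC⟩
    have hcard : (N + 1 : ℕ) ≤ ∑ r : Fin k, (SLC.Bset (L r)).card := by
      calc N + 1 = (Finset.range (N+1)).card := (Finset.card_range _).symm
        _ ≤ (Finset.univ.biUnion (fun r => SLC.Bset (L r))).card :=
            Finset.card_le_card hcover
        _ ≤ ∑ r : Fin k, (SLC.Bset (L r)).card := Finset.card_biUnion_le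
    have hperB : ∀ r : Fin k, ((SLC.Bset (L r)).card : ℝ) ≤ ((L r).length : ℝ) * (D + 1) := by
      intro r
      have h1 := SLC.Bcard_real (L r)
      have h2 := SLC.sum_le_len (L r) (fun b => ((b.2 - b.1 : ℕ) : ℝ))
        (Real.log c / Real.log q) (SLC.span_le hq1 hc1 (hL r).1 (hblk12 r))
      rw [hDdef]
      have h3 : ((L r).length : ℝ) * (Real.log c / Real.log q + 1) =
          ((L r).length : ℝ) * (Real.log c / Real.log q) + (L r).length := by ring
      linarith [h1, h2, h3]
    have hc2 : ((N:ℝ) + 1) ≤ ∑ r : Fin k, ((SLC.Bset (L r)).card : ℝ) := by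
      have := (Nat.cast_le (α := ℝ)).2 hcard
      push_cast at this
      linarith
    calc ((N:ℝ) + 1) ≤ ∑ r : Fin k, ((SLC.Bset (L r)).card : ℝ) := hc2
      _ ≤ ∑ r : Fin k, ((L r).length : ℝ) * (D + 1) := Finset.sum_le_sum (fun r _ => hperB r)
      _ = (D + 1) * SM := by rw [hSM, ← Finset.sum_mul]; ring
  -- final contradiction
  have hSMb : SM ≤ ((s:ℝ) + (k:ℝ)) * D + 2 * k := by
    have he : (s:ℝ) * ((N:ℝ) + 1) = (s:ℝ) * N + s := by ring
    have hd : ((s:ℝ) + (k:ℝ)) * D = (s:ℝ) * D + (k:ℝ) * D := by ring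
    linarith [hsum1, hSC0, he, hd, hs1, hD0]
  have hNceil : (D + 1) * (((s:ℝ) + (k:ℝ)) * D + 2 * (k:ℝ)) ≤ (N:ℝ) := by
    rw [hNdef]
    exact Nat.le_ceil _
  have hfin : (D + 1) * SM ≤ (D + 1) * (((s:ℝ) + (k:ℝ)) * D + 2 * (k:ℝ)) :=
    mul_le_mul_of_nonneg_left hSMb (by linarith)
  linarith [hglob, hfin, hNceil]
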